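/- Let p, q, r : ℝ⁴ → ℝ be smooth functions of (w, z, x, y), and define m := p_z − q_w + p q_x − q p_x + q q_y − r p_y and n := q_z − r_w + q r_y − r q_y + p r_x − q q_x. Consider ℝ⁵ with coordinates (w, z, x, y, λ) and the vector fields X₁ = ∂_w − p∂_x − q∂_y + λ∂_y + (m − λ(p_x + q_y))∂_λ and X₂ = ∂_z − q∂_x − r∂_y − λ∂_x + (n − λ(q_x + r_y))∂_λ. Then X₁ and X₂ commute identically on ℝ⁵ if and only if (p, q, r) satisfies the system (SD): p_{xx} + 2q_{xy} + r_{yy} = 0, m_x + n_y = 0, and m_z − q m_x − r m_y + (q_x + r_y) m = n_w − p n_x − q n_y + (p_x + q_y) n. -/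

import Mathlib

noncomputable section

/-- Partial derivative of `f` along the `i`-th coordinate direction on `ℝⁿ`.
Coordinates on `ℝ⁴` are `(w, z, x, y) = (0, 1, 2, 3)`; on `ℝ⁵` they are
`(w, z, x, y, λ) = (0, 1, 2, 3, 4)`. -/
def pd {n : ℕ} (i : Fin n) (f : (Fin n → ℝ) → ℝ) : (Fin n → ℝ) → ℝ :=
  fun x => fderiv ℝ f x (Pi.single i 1)

/-- Lie bracket of vector fields on `ℝⁿ`:
`[X,Y](p) = (DY)(p)(X(p)) − (DX)(p)(Y(p))`. -/
def lieBr {n : ℕ} (X Y : (Fin n → ℝ) → (Fin n → ℝ)) :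
    (Fin n → ℝ) → (Fin n → ℝ) :=
  fun p => fderiv ℝ Y p (X p) - fderiv ℝ X p (Y p)

/-- Projection `(w, z, x, y, λ) ↦ (w, z, x, y)`. -/
def π4 (s : Fin 5 → ℝ) : Fin 4 → ℝ := ![s 0, s 1, s 2, s 3]

/-- `m = p_z − q_w + p q_x − q p_x + q q_y − r p_y`. -/
def mSD (p q r : (Fin 4 → ℝ) → ℝ) : (Fin 4 → ℝ) → ℝ :=
  fun x =>
    pd 1 p x - pd 0 q x + p x * pd 2 q x - q x * pd 2 p x
      + q x * pd 3 q x - r x * pd 3 p x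

/-- `n = q_z − r_w + q r_y − r q_y + p r_x − q q_x`. -/
def nSD (p q r : (Fin 4 → ℝ) → ℝ) : (Fin 4 → ℝ) → ℝ :=
  fun x =>
    pd 1 q x - pd 0 r x + q x * pd 3 r x - r x * pd 3 q x
      + p x * pd 2 r x - q x * pd 2 q x

/-- First equation of system (SD): `p_{xx} + 2q_{xy} + r_{yy} = 0`. -/
def SDeq1 (p q r : (Fin 4 → ℝ) → ℝ) : Prop :=
  ∀ x : Fin 4 → ℝ, pd 2 (pd 2 p) x + 2 * pd 2 (pd 3 q) x + pd 3 (pd 3 r) x = 0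

/-- Second equation of system (SD): `m_x + n_y = 0`. -/
def SDeq2 (p q r : (Fin 4 → ℝ) → ℝ) : Prop :=
  ∀ x : Fin 4 → ℝ, pd 2 (mSD p q r) x + pd 3 (nSD p q r) x = 0

/-- Third equation of system (SD):
`m_z − q m_x − r m_y + (q_x + r_y)m = n_w − p n_x − q n_y + (p_x + q_y)n`. -/
def SDeq3 (p q r : (Fin 4 → ℝ) → ℝ) : Prop :=
  ∀ x : Fin 4 → ℝ,
    pd 1 (mSD p q r) x - q x * pd 2 (mSD p q r) x - r x * pd 3 (mSD p q r) x
        + (pd 2 q x + pd 3 r x) * mSD p q r x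
      = pd 0 (nSD p q r) x - p x * pd 2 (nSD p q r) x - q x * pd 3 (nSD p q r) x
        + (pd 2 p x + pd 3 q x) * nSD p q r x

/-- `X₁ = ∂_w − p∂_x − q∂_y + λ∂_y + (m − λ(p_x + q_y))∂_λ`. -/
def sdLax1 (p q r : (Fin 4 → ℝ) → ℝ) : (Fin 5 → ℝ) → (Fin 5 → ℝ) :=
  fun s =>
    ![1, 0, -(p (π4 s)), -(q (π4 s)) + s 4,
      mSD p q r (π4 s) - s 4 * (pd 2 p (π4 s) + pd 3 q (π4 s))]

/-- `X₂ = ∂_z − q∂_x − r∂_y − λ∂_x + (n − λ(q_x + r_y))∂_λ`. -/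
def sdLax2 (p q r : (Fin 4 → ℝ) → ℝ) : (Fin 5 → ℝ) → (Fin 5 → ℝ) :=
  fun s =>
    ![0, 1, -(q (π4 s)) - s 4, -(r (π4 s)),
      nSD p q r (π4 s) - s 4 * (pd 2 q (π4 s) + pd 3 r (π4 s))]

section SDAux

lemma le_inf' (k : ℕ) : ((k:ℕ) : WithTop ℕ∞) ≤ ((⊤:ℕ∞) : WithTop ℕ∞) := by
  rw [show (((k:ℕ)) : WithTop ℕ∞) = (((k:ℕ∞)) : WithTop ℕ∞) by rfl, WithTop.coe_le_coe]
  exact le_top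


-- pd as CLM applied to fderiv
lemma pd_eq {n : ℕ} (i : Fin n) (f : (Fin n → ℝ) → ℝ) :
    pd i f = fun x => (ContinuousLinearMap.apply ℝ ℝ (Pi.single i (1:ℝ))) (fderiv ℝ f x) := rfl

lemma contDiff_pd {n : ℕ} (i : Fin n) {f : (Fin n → ℝ) → ℝ} (hf : ContDiff ℝ (⊤:ℕ∞) f) :
    ContDiff ℝ (⊤:ℕ∞) (pd i f) := by
  rw [pd_eq]
  exact (ContinuousLinearMap.apply ℝ ℝ (Pi.single i (1:ℝ))).contDiff.comp
    (hf.fderiv_right (m := (⊤:ℕ∞)) (by norm_cast))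

lemma pd_comm {n : ℕ} (i j : Fin n) {f : (Fin n → ℝ) → ℝ} (hf : ContDiff ℝ (⊤:ℕ∞) f)
    (x : Fin n → ℝ) : pd i (pd j f) x = pd j (pd i f) x := by
  have hsymm : IsSymmSndFDerivAt ℝ f x := by
    apply (hf.contDiffAt).isSymmSndFDerivAt
    rw [minSmoothness_of_isRCLikeNormedField]
    exact_mod_cast le_inf' 2
  have h : ∀ (k l : Fin n), pd k (pd l f) x
      = fderiv ℝ (fderiv ℝ f) x (Pi.single k 1) (Pi.single l 1) := by
    intro k l
    have hdiff : DifferentiableAt ℝ (fderiv ℝ f) x :=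
      ((hf.fderiv_right (m := (⊤:ℕ∞)) (by norm_cast)).differentiable (by norm_cast)).differentiableAt
    have hrfl : pd l f = fun y => (fderiv ℝ f y) (Pi.single l 1) := rfl
    simp only [pd, hrfl]
    rw [fderiv_clm_apply hdiff (differentiableAt_const _)]
    simp
  rw [h i j, h j i, hsymm.eq]

def π4L : (Fin 5 → ℝ) →L[ℝ] (Fin 4 → ℝ) :=
  ContinuousLinearMap.pi (fun i => ContinuousLinearMap.proj (Fin.castSucc i))

lemma π4_eq : π4 = ⇑π4L := by
  funext s i
  fin_cases i <;> rfl

-- expansion of a CLM on ℝ⁴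
lemma clm_expand4 (L : (Fin 4 → ℝ) →L[ℝ] ℝ) (v : Fin 4 → ℝ) :
    L v = v 0 * L (Pi.single 0 1) + v 1 * L (Pi.single 1 1)
      + v 2 * L (Pi.single 2 1) + v 3 * L (Pi.single 3 1) := by
  have hv : v = Pi.single 0 (v 0) + Pi.single 1 (v 1) + Pi.single 2 (v 2) + Pi.single 3 (v 3) := by
    funext i; fin_cases i <;> simp [Pi.single_apply]
  have hs : ∀ (i : Fin 4) (c : ℝ), (Pi.single i c : Fin 4 → ℝ) = c • (Pi.single i (1:ℝ) : Fin 4 → ℝ) := by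
    intro i c; funext j; by_cases h : i = j <;> simp [Pi.single_apply, h]
  rw [hv, hs 0, hs 1, hs 2, hs 3]
  simp [map_add, map_smul]
  try ring

-- the main lift derivative lemma
lemma fderiv_lift (s v : Fin 5 → ℝ) (f g : (Fin 4 → ℝ) → ℝ)
    (hf : DifferentiableAt ℝ f (π4 s)) (hg : DifferentiableAt ℝ g (π4 s)) (c : ℝ) :
    fderiv ℝ (fun t => f (π4 t) + c * (t 4 * g (π4 t))) s v
      = fderiv ℝ f (π4 s) (π4 v) + c * (v 4 * g (π4 s) + s 4 * fderiv ℝ g (π4 s) (π4 v)) := by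
  have hπ : HasFDerivAt π4 π4L s := by rw [π4_eq]; exact π4L.hasFDerivAt
  have h4 : HasFDerivAt (fun t : Fin 5 → ℝ => t 4) (ContinuousLinearMap.proj (R := ℝ) (φ := fun _ : Fin 5 => ℝ) 4) s :=
    (ContinuousLinearMap.proj (R := ℝ) (φ := fun _ : Fin 5 => ℝ) 4).hasFDerivAt
  have hfc : HasFDerivAt (fun t => f (π4 t)) ((fderiv ℝ f (π4 s)).comp π4L) s :=
    hf.hasFDerivAt.comp s hπ
  have hgc : HasFDerivAt (fun t => g (π4 t)) ((fderiv ℝ g (π4 s)).comp π4L) s :=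
    hg.hasFDerivAt.comp s hπ
  have hmul := h4.mul hgc
  have htot := hfc.add ((hmul.const_mul c))
  have := htot.fderiv
  rw [show (fun t => f (π4 t) + c * (t 4 * g (π4 t)))
      = ((fun t => f (π4 t)) + fun y => c * (((fun t : Fin 5 → ℝ => t 4) * fun t => g (π4 t)) y)) from rfl,
    this]
  simp [π4_eq]
  ring

lemma diff_lift (s : Fin 5 → ℝ) (f g : (Fin 4 → ℝ) → ℝ)
    (hf : DifferentiableAt ℝ f (π4 s)) (hg : DifferentiableAt ℝ g (π4 s)) (c : ℝ) :
    DifferentiableAt ℝ (fun t => f (π4 t) + c * (t 4 * g (π4 t))) s := by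
  have hπ : HasFDerivAt π4 π4L s := by rw [π4_eq]; exact π4L.hasFDerivAt
  have h4 : HasFDerivAt (fun t : Fin 5 → ℝ => t 4) (ContinuousLinearMap.proj (R := ℝ) (φ := fun _ : Fin 5 => ℝ) 4) s :=
    (ContinuousLinearMap.proj (R := ℝ) (φ := fun _ : Fin 5 => ℝ) 4).hasFDerivAt
  exact ((hf.hasFDerivAt.comp s hπ).add (((h4.mul (hg.hasFDerivAt.comp s hπ))).const_mul c)).differentiableAt

-- differentiability shortcuts
lemma diffAt_of_top {n : ℕ} {f : (Fin n → ℝ) → ℝ} (hf : ContDiff ℝ (⊤:ℕ∞) f)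
    (x : Fin n → ℝ) : DifferentiableAt ℝ f x :=
  (hf.differentiable (by norm_cast)).differentiableAt

lemma fderiv_expand (f : (Fin 4 → ℝ) → ℝ) (x u : Fin 4 → ℝ) :
    fderiv ℝ f x u = u 0 * pd 0 f x + u 1 * pd 1 f x + u 2 * pd 2 f x + u 3 * pd 3 f x :=
  clm_expand4 _ u

lemma pd_const (i : Fin 4) (c : ℝ) (x : Fin 4 → ℝ) : pd i (fun _ => c) x = 0 := by
  simp [pd]

lemma pd_neg {f : (Fin 4 → ℝ) → ℝ} (hf : DifferentiableAt ℝ f x) (i : Fin 4) :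
    pd i (fun y => -(f y)) x = -(pd i f x) := by
  simp [pd, fderiv_neg]

lemma pd_neg_add {f g : (Fin 4 → ℝ) → ℝ} (hf : DifferentiableAt ℝ f x)
    (hg : DifferentiableAt ℝ g x) (i : Fin 4) :
    pd i (fun y => -(f y + g y)) x = -(pd i f x + pd i g x) := by
  have H := ((hf.hasFDerivAt.add hg.hasFDerivAt)).neg
  have e : pd i (fun y => -(f y + g y)) x
      = fderiv ℝ (fun y => -(f y + g y)) x (Pi.single i 1) := rfl
  rw [e, show (fun y => -(f y + g y)) = -(f + g) from rfl, H.fderiv]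
  simp [pd]

variable {p q r : (Fin 4 → ℝ) → ℝ}

lemma contDiff_mSD (hp : ContDiff ℝ (⊤:ℕ∞) p) (hq : ContDiff ℝ (⊤:ℕ∞) q)
    (hr : ContDiff ℝ (⊤:ℕ∞) r) : ContDiff ℝ (⊤:ℕ∞) (mSD p q r) :=
  (((((contDiff_pd 1 hp).sub (contDiff_pd 0 hq)).add (hp.mul (contDiff_pd 2 hq))).sub
    (hq.mul (contDiff_pd 2 hp))).add (hq.mul (contDiff_pd 3 hq))).sub (hr.mul (contDiff_pd 3 hp))

lemma contDiff_nSD (hp : ContDiff ℝ (⊤:ℕ∞) p) (hq : ContDiff ℝ (⊤:ℕ∞) q)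
    (hr : ContDiff ℝ (⊤:ℕ∞) r) : ContDiff ℝ (⊤:ℕ∞) (nSD p q r) :=
  (((((contDiff_pd 1 hq).sub (contDiff_pd 0 hr)).add (hq.mul (contDiff_pd 3 hr))).sub
    (hr.mul (contDiff_pd 3 hq))).add (hp.mul (contDiff_pd 2 hr))).sub (hq.mul (contDiff_pd 2 hq))

lemma pd_mSD (hp : ContDiff ℝ (⊤:ℕ∞) p) (hq : ContDiff ℝ (⊤:ℕ∞) q)
    (hr : ContDiff ℝ (⊤:ℕ∞) r) (i : Fin 4) (x : Fin 4 → ℝ) :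
    pd i (mSD p q r) x
      = pd i (pd 1 p) x - pd i (pd 0 q) x
        + (pd i p x * pd 2 q x + p x * pd i (pd 2 q) x)
        - (pd i q x * pd 2 p x + q x * pd i (pd 2 p) x)
        + (pd i q x * pd 3 q x + q x * pd i (pd 3 q) x)
        - (pd i r x * pd 3 p x + r x * pd i (pd 3 p) x) := by
  have dP := (diffAt_of_top hp x).hasFDerivAt
  have dQ := (diffAt_of_top hq x).hasFDerivAt
  have dR := (diffAt_of_top hr x).hasFDerivAt
  have d1p := (diffAt_of_top (contDiff_pd 1 hp) x).hasFDerivAt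
  have d0q := (diffAt_of_top (contDiff_pd 0 hq) x).hasFDerivAt
  have d2q := (diffAt_of_top (contDiff_pd 2 hq) x).hasFDerivAt
  have d2p := (diffAt_of_top (contDiff_pd 2 hp) x).hasFDerivAt
  have d3q := (diffAt_of_top (contDiff_pd 3 hq) x).hasFDerivAt
  have d3p := (diffAt_of_top (contDiff_pd 3 hp) x).hasFDerivAt
  have H := ((((d1p.sub d0q).add (dP.mul d2q)).sub (dQ.mul d2p)).add (dQ.mul d3q)).sub
    (dR.mul d3p)
  have e : pd i (mSD p q r) x
      = fderiv ℝ (fun y => pd 1 p y - pd 0 q y + p y * pd 2 q y - q y * pd 2 p y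
          + q y * pd 3 q y - r y * pd 3 p y) x (Pi.single i 1) := rfl
  rw [e, show (fun y => pd 1 p y - pd 0 q y + p y * pd 2 q y - q y * pd 2 p y
          + q y * pd 3 q y - r y * pd 3 p y) = (pd 1 p - pd 0 q + p * pd 2 q - q * pd 2 p
          + q * pd 3 q - r * pd 3 p) from rfl, H.fderiv]
  simp [pd]
  ring

lemma pd_nSD (hp : ContDiff ℝ (⊤:ℕ∞) p) (hq : ContDiff ℝ (⊤:ℕ∞) q)
    (hr : ContDiff ℝ (⊤:ℕ∞) r) (i : Fin 4) (x : Fin 4 → ℝ) :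
    pd i (nSD p q r) x
      = pd i (pd 1 q) x - pd i (pd 0 r) x
        + (pd i q x * pd 3 r x + q x * pd i (pd 3 r) x)
        - (pd i r x * pd 3 q x + r x * pd i (pd 3 q) x)
        + (pd i p x * pd 2 r x + p x * pd i (pd 2 r) x)
        - (pd i q x * pd 2 q x + q x * pd i (pd 2 q) x) := by
  have dP := (diffAt_of_top hp x).hasFDerivAt
  have dQ := (diffAt_of_top hq x).hasFDerivAt
  have dR := (diffAt_of_top hr x).hasFDerivAt
  have d1q := (diffAt_of_top (contDiff_pd 1 hq) x).hasFDerivAt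
  have d0r := (diffAt_of_top (contDiff_pd 0 hr) x).hasFDerivAt
  have d3r := (diffAt_of_top (contDiff_pd 3 hr) x).hasFDerivAt
  have d3q := (diffAt_of_top (contDiff_pd 3 hq) x).hasFDerivAt
  have d2r := (diffAt_of_top (contDiff_pd 2 hr) x).hasFDerivAt
  have d2q := (diffAt_of_top (contDiff_pd 2 hq) x).hasFDerivAt
  have H := ((((d1q.sub d0r).add (dQ.mul d3r)).sub (dR.mul d3q)).add (dP.mul d2r)).sub
    (dQ.mul d2q)
  have e : pd i (nSD p q r) x
      = fderiv ℝ (fun y => pd 1 q y - pd 0 r y + q y * pd 3 r y - r y * pd 3 q y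
          + p y * pd 2 r y - q y * pd 2 q y) x (Pi.single i 1) := rfl
  rw [e, show (fun y => pd 1 q y - pd 0 r y + q y * pd 3 r y - r y * pd 3 q y
          + p y * pd 2 r y - q y * pd 2 q y) = (pd 1 q - pd 0 r + q * pd 3 r - r * pd 3 q
          + p * pd 2 r - q * pd 2 q) from rfl, H.fderiv]
  simp [pd]
  ring

def XA (p q r : (Fin 4 → ℝ) → ℝ) : Fin 5 → (Fin 4 → ℝ) → ℝ :=
  ![fun _ => 1, fun _ => 0, fun y => -(p y), fun y => -(q y), mSD p q r]
def XB (p q : (Fin 4 → ℝ) → ℝ) : Fin 5 → (Fin 4 → ℝ) → ℝ :=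
  ![fun _ => 0, fun _ => 0, fun _ => 0, fun _ => 1, fun y => -(pd 2 p y + pd 3 q y)]
def YA (p q r : (Fin 4 → ℝ) → ℝ) : Fin 5 → (Fin 4 → ℝ) → ℝ :=
  ![fun _ => 0, fun _ => 1, fun y => -(q y), fun y => -(r y), nSD p q r]
def YB (q r : (Fin 4 → ℝ) → ℝ) : Fin 5 → (Fin 4 → ℝ) → ℝ :=
  ![fun _ => 0, fun _ => 0, fun _ => -1, fun _ => 0, fun y => -(pd 2 q y + pd 3 r y)]

lemma sdLax1_eq : sdLax1 p q r = fun t i => XA p q r i (π4 t) + t 4 * XB p q i (π4 t) := by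
  funext t i
  fin_cases i <;> simp [sdLax1, XA, XB] <;> ring

lemma sdLax2_eq : sdLax2 p q r = fun t i => YA p q r i (π4 t) + t 4 * YB q r i (π4 t) := by
  funext t i
  fin_cases i <;> simp [sdLax2, YA, YB] <;> ring

lemma hXA (hp : ContDiff ℝ (⊤:ℕ∞) p) (hq : ContDiff ℝ (⊤:ℕ∞) q)
    (hr : ContDiff ℝ (⊤:ℕ∞) r) (i : Fin 5) : ContDiff ℝ (⊤:ℕ∞) (XA p q r i) := by
  fin_cases i
  · exact contDiff_const
  · exact contDiff_const
  · exact hp.neg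
  · exact hq.neg
  · exact contDiff_mSD hp hq hr
lemma hXB (hp : ContDiff ℝ (⊤:ℕ∞) p) (hq : ContDiff ℝ (⊤:ℕ∞) q)
    (i : Fin 5) : ContDiff ℝ (⊤:ℕ∞) (XB p q i) := by
  fin_cases i
  · exact contDiff_const
  · exact contDiff_const
  · exact contDiff_const
  · exact contDiff_const
  · exact ((contDiff_pd 2 hp).add (contDiff_pd 3 hq)).neg
lemma hYA (hp : ContDiff ℝ (⊤:ℕ∞) p) (hq : ContDiff ℝ (⊤:ℕ∞) q)
    (hr : ContDiff ℝ (⊤:ℕ∞) r) (i : Fin 5) : ContDiff ℝ (⊤:ℕ∞) (YA p q r i) := by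
  fin_cases i
  · exact contDiff_const
  · exact contDiff_const
  · exact hq.neg
  · exact hr.neg
  · exact contDiff_nSD hp hq hr
lemma hYB (hq : ContDiff ℝ (⊤:ℕ∞) q) (hr : ContDiff ℝ (⊤:ℕ∞) r)
    (i : Fin 5) : ContDiff ℝ (⊤:ℕ∞) (YB q r i) := by
  fin_cases i
  · exact contDiff_const
  · exact contDiff_const
  · exact contDiff_const
  · exact contDiff_const
  · exact ((contDiff_pd 2 hq).add (contDiff_pd 3 hr)).neg

lemma fderiv_field_apply (F G : Fin 5 → (Fin 4 → ℝ) → ℝ) (s v : Fin 5 → ℝ)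
    (hF : ∀ j, DifferentiableAt ℝ (F j) (π4 s)) (hG : ∀ j, DifferentiableAt ℝ (G j) (π4 s))
    (i : Fin 5) :
    fderiv ℝ (fun t j => F j (π4 t) + t 4 * G j (π4 t)) s v i
      = fderiv ℝ (F i) (π4 s) (π4 v)
        + (v 4 * G i (π4 s) + s 4 * fderiv ℝ (G i) (π4 s) (π4 v)) := by
  have hdiff : ∀ j, DifferentiableAt ℝ (fun t => F j (π4 t) + t 4 * G j (π4 t)) s := by
    intro j
    have := diff_lift s (F j) (G j) (hF j) (hG j) 1
    simpa using this
  rw [fderiv_pi hdiff]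
  simp only [ContinuousLinearMap.pi_apply]
  have := fderiv_lift s v (F i) (G i) (hF i) (hG i) 1
  simpa using this

lemma lieBr_eval (hp : ContDiff ℝ (⊤:ℕ∞) p) (hq : ContDiff ℝ (⊤:ℕ∞) q)
    (hr : ContDiff ℝ (⊤:ℕ∞) r) (s : Fin 5 → ℝ) :
    lieBr (sdLax1 p q r) (sdLax2 p q r) s =
      ![0, 0, 0, 0,
        -(s 4)^2 * (pd 2 (pd 2 p) (π4 s) + 2 * pd 2 (pd 3 q) (π4 s) + pd 3 (pd 3 r) (π4 s))
        + 2 * s 4 * (pd 2 (mSD p q r) (π4 s) + pd 3 (nSD p q r) (π4 s))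
        + ((pd 0 (nSD p q r) (π4 s) - p (π4 s) * pd 2 (nSD p q r) (π4 s)
            - q (π4 s) * pd 3 (nSD p q r) (π4 s)
            + (pd 2 p (π4 s) + pd 3 q (π4 s)) * nSD p q r (π4 s))
          - (pd 1 (mSD p q r) (π4 s) - q (π4 s) * pd 2 (mSD p q r) (π4 s)
            - r (π4 s) * pd 3 (mSD p q r) (π4 s)
            + (pd 2 q (π4 s) + pd 3 r (π4 s)) * mSD p q r (π4 s)))] := by
  have hFX := fun j => diffAt_of_top (hXA hp hq hr j) (π4 s)
  have hGX := fun j => diffAt_of_top (hXB hp hq j) (π4 s)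
  have hFY := fun j => diffAt_of_top (hYA hp hq hr j) (π4 s)
  have hGY := fun j => diffAt_of_top (hYB hq hr j) (π4 s)
  have hvX : π4 ((fun t j => XA p q r j (π4 t) + t 4 * XB p q j (π4 t)) s)
      = ![1, 0, -(p (π4 s)), -(q (π4 s)) + s 4] := by
    funext j; fin_cases j <;> (simp [π4, XA, XB]; try ring)
  have hvY : π4 ((fun t j => YA p q r j (π4 t) + t 4 * YB q r j (π4 t)) s)
      = ![0, 1, -(q (π4 s)) - s 4, -(r (π4 s))] := by
    funext j; fin_cases j <;> (simp [π4, YA, YB]; try ring)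
  have hvX4 : ((fun t j => XA p q r j (π4 t) + t 4 * XB p q j (π4 t)) s) 4
      = mSD p q r (π4 s) + s 4 * (-(pd 2 p (π4 s) + pd 3 q (π4 s))) := by
    simp [XA, XB, Matrix.cons_val_four, Matrix.cons_val_succ]
  have hvY4 : ((fun t j => YA p q r j (π4 t) + t 4 * YB q r j (π4 t)) s) 4
      = nSD p q r (π4 s) + s 4 * (-(pd 2 q (π4 s) + pd 3 r (π4 s))) := by
    simp [YA, YB, Matrix.cons_val_four, Matrix.cons_val_succ]
  have hbr : lieBr (sdLax1 p q r) (sdLax2 p q r) s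
      = fderiv ℝ (sdLax2 p q r) s (sdLax1 p q r s)
        - fderiv ℝ (sdLax1 p q r) s (sdLax2 p q r s) := rfl
  rw [hbr, sdLax1_eq, sdLax2_eq]
  funext i
  rw [Pi.sub_apply,
    fderiv_field_apply (YA p q r) (YB q r) s _ hFY hGY i,
    fderiv_field_apply (XA p q r) (XB p q) s _ hFX hGX i,
    hvX, hvY, hvX4, hvY4]
  fin_cases i <;>
    simp only [show ((⟨0, by norm_num⟩ : Fin 5)) = 0 from rfl,
      show ((⟨1, by norm_num⟩ : Fin 5)) = 1 from rfl,
      show ((⟨2, by norm_num⟩ : Fin 5)) = 2 from rfl,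
      show ((⟨3, by norm_num⟩ : Fin 5)) = 3 from rfl,
      show ((⟨4, by norm_num⟩ : Fin 5)) = 4 from rfl]
  · simp [XA, XB, YA, YB, fderiv_expand, pd_const]
  · simp [XA, XB, YA, YB, fderiv_expand, pd_const]
  · -- third component
    simp only [XA, XB, YA, YB, Matrix.cons_val_two, Matrix.tail_cons, Matrix.head_cons,
      Matrix.cons_val_zero, Matrix.cons_val_one]
    rw [fderiv_expand, fderiv_expand, fderiv_expand, fderiv_expand]
    simp [pd_const, pd_neg (diffAt_of_top hp (π4 s)), pd_neg (diffAt_of_top hq (π4 s)),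
      pd_neg (diffAt_of_top hr (π4 s)), mSD, nSD]
    ring
  · simp only [XA, XB, YA, YB, Matrix.cons_val_three, Matrix.tail_cons, Matrix.head_cons,
      Matrix.cons_val_zero, Matrix.cons_val_one]
    rw [fderiv_expand, fderiv_expand, fderiv_expand, fderiv_expand]
    simp [pd_const, pd_neg (diffAt_of_top hp (π4 s)), pd_neg (diffAt_of_top hq (π4 s)),
      pd_neg (diffAt_of_top hr (π4 s)), mSD, nSD]
    ring
  · -- fifth component: the main computation
    simp only [XA, XB, YA, YB, Matrix.cons_val_four, Matrix.cons_val_succ, Matrix.tail_cons,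
      Matrix.head_cons, Matrix.cons_val_zero, Matrix.cons_val_one]
    rw [fderiv_expand, fderiv_expand, fderiv_expand, fderiv_expand]
    simp only [Matrix.cons_val_zero, Matrix.cons_val_one, Matrix.head_cons,
      Matrix.cons_val_two, Matrix.cons_val_three, Matrix.tail_cons, Matrix.cons_val_four,
      Matrix.cons_val_succ]
    rw [pd_neg_add (diffAt_of_top (contDiff_pd 2 hq) (π4 s)) (diffAt_of_top (contDiff_pd 3 hr) (π4 s)) 0,
      pd_neg_add (diffAt_of_top (contDiff_pd 2 hq) (π4 s)) (diffAt_of_top (contDiff_pd 3 hr) (π4 s)) 1,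
      pd_neg_add (diffAt_of_top (contDiff_pd 2 hq) (π4 s)) (diffAt_of_top (contDiff_pd 3 hr) (π4 s)) 2,
      pd_neg_add (diffAt_of_top (contDiff_pd 2 hq) (π4 s)) (diffAt_of_top (contDiff_pd 3 hr) (π4 s)) 3]
    rw [pd_neg_add (diffAt_of_top (contDiff_pd 2 hp) (π4 s)) (diffAt_of_top (contDiff_pd 3 hq) (π4 s)) 0,
      pd_neg_add (diffAt_of_top (contDiff_pd 2 hp) (π4 s)) (diffAt_of_top (contDiff_pd 3 hq) (π4 s)) 1,
      pd_neg_add (diffAt_of_top (contDiff_pd 2 hp) (π4 s)) (diffAt_of_top (contDiff_pd 3 hq) (π4 s)) 2,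
      pd_neg_add (diffAt_of_top (contDiff_pd 2 hp) (π4 s)) (diffAt_of_top (contDiff_pd 3 hq) (π4 s)) 3]
    simp only [pd_mSD hp hq hr, pd_nSD hp hq hr]
    simp only [pd_comm 0 2 hp, pd_comm 0 3 hp, pd_comm 1 2 hp, pd_comm 1 3 hp, pd_comm 2 3 hp,
      pd_comm 0 2 hq, pd_comm 0 3 hq, pd_comm 1 2 hq, pd_comm 1 3 hq, pd_comm 2 3 hq,
      pd_comm 0 2 hr, pd_comm 0 3 hr, pd_comm 1 2 hr, pd_comm 1 3 hr, pd_comm 2 3 hr,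
      pd_comm 0 1 hp, pd_comm 0 1 hq, pd_comm 0 1 hr]
    simp only [mSD, nSD]
    ring

end SDAux

/-- For smooth `p, q, r`, the Lax fields `X₁, X₂` commute identically on `ℝ⁵`
iff `(p, q, r)` solves system (SD). -/
theorem sd_lax_commute_iff_SD
    (p q r : (Fin 4 → ℝ) → ℝ)
    (hp : ContDiff ℝ (⊤ : ℕ∞) p)
    (hq : ContDiff ℝ (⊤ : ℕ∞) q)
    (hr : ContDiff ℝ (⊤ : ℕ∞) r) :
    (∀ s : Fin 5 → ℝ, lieBr (sdLax1 p q r) (sdLax2 p q r) s = 0) ↔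
      (SDeq1 p q r ∧ SDeq2 p q r ∧ SDeq3 p q r) := by

  constructor
  · intro h
    have key : ∀ (x : Fin 4 → ℝ) (lam : ℝ),
        -(lam)^2 * (pd 2 (pd 2 p) x + 2 * pd 2 (pd 3 q) x + pd 3 (pd 3 r) x)
        + 2 * lam * (pd 2 (mSD p q r) x + pd 3 (nSD p q r) x)
        + ((pd 0 (nSD p q r) x - p x * pd 2 (nSD p q r) x - q x * pd 3 (nSD p q r) x
            + (pd 2 p x + pd 3 q x) * nSD p q r x)
          - (pd 1 (mSD p q r) x - q x * pd 2 (mSD p q r) x - r x * pd 3 (mSD p q r) x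
            + (pd 2 q x + pd 3 r x) * mSD p q r x)) = 0 := by
      intro x lam
      have h5 := h (![x 0, x 1, x 2, x 3, lam])
      rw [lieBr_eval hp hq hr] at h5
      have h4 := congrFun h5 4
      have hπ : π4 (![x 0, x 1, x 2, x 3, lam]) = x := by
        funext j; fin_cases j <;> rfl
      rw [hπ, show (![x 0, x 1, x 2, x 3, lam] : Fin 5 → ℝ) 4 = lam from rfl] at h4
      simpa using h4
    refine ⟨?_, ?_, ?_⟩
    · intro x
      have k0 := key x 0
      have k1 := key x 1
      have k2 := key x (-1)
      norm_num at k0 k1 k2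
      linarith
    · intro x
      have k0 := key x 0
      have k1 := key x 1
      have k2 := key x (-1)
      norm_num at k0 k1 k2
      linarith
    · intro x
      have k0 := key x 0
      norm_num at k0
      linarith
  · rintro ⟨h1, h2, h3⟩ s
    rw [lieBr_eval hp hq hr]
    funext i
    fin_cases i <;>
      simp only [show ((⟨0, by norm_num⟩ : Fin 5)) = 0 from rfl,
        show ((⟨1, by norm_num⟩ : Fin 5)) = 1 from rfl,
        show ((⟨2, by norm_num⟩ : Fin 5)) = 2 from rfl,
        show ((⟨3, by norm_num⟩ : Fin 5)) = 3 from rfl,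
        show ((⟨4, by norm_num⟩ : Fin 5)) = 4 from rfl] <;>
      simp only [Matrix.cons_val_zero, Matrix.cons_val_one, Matrix.head_cons,
        Matrix.cons_val_two, Matrix.cons_val_three, Matrix.cons_val_four,
        Matrix.cons_val_succ, Matrix.tail_cons, Pi.zero_apply]
    rw [h1 (π4 s), h2 (π4 s), h3 (π4 s)]
    ring
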